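/- arXiv:1706.08330 — 2 statements merged into one kernel-verified Lean document; each statement's English description precedes it below -/
import Mathlib

section
/- Let G be a graph with exactly one end ω, which is undominated and has vertex degree k. Then for every ω-relevant separation (C,D), for all but finitely many vertices v in C one has α(v) ≤ α(C,D). -/
open Set Cardinal

namespace PaperEnds

/-- A ray in `G`: a one-sided infinite path, i.e. an injective sequence of
pairwise adjacent consecutive vertices. -/
def IsRay {V : Type} (G : SimpleGraph V) (r : ℕ → V) : Prop :=
  Function.Injective r ∧ ∀ n, G.Adj (r n) (r (n + 1))

/-- `a` and `b` are connected by a walk avoiding the vertex set `S`. -/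
def ReachableOutside {V : Type} (G : SimpleGraph V) (S : Set V) (a b : V) : Prop :=
  ∃ w : G.Walk a b, ∀ v ∈ w.support, v ∉ S

/-- Two rays are equivalent (belong to the same end) if for every finite vertex
set `S` they have tails lying in the same component of `G − S`. -/
def RayEquiv {V : Type} (G : SimpleGraph V) (r₁ r₂ : ℕ → V) : Prop :=
  ∀ S : Set V, S.Finite → ∃ m n : ℕ,
    (∀ i, m ≤ i → r₁ i ∉ S) ∧ (∀ j, n ≤ j → r₂ j ∉ S) ∧
    ReachableOutside G S (r₁ m) (r₂ n)

/-- `r` is a ray belonging to the end represented by the ray `ω`. -/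
def InEnd {V : Type} (G : SimpleGraph V) (ω r : ℕ → V) : Prop :=
  IsRay G r ∧ RayEquiv G r ω

/-- `G` has exactly one end: it has a ray and any two rays are equivalent. -/
def OneEnded {V : Type} (G : SimpleGraph V) : Prop :=
  (∃ r, IsRay G r) ∧ ∀ r₁ r₂, IsRay G r₁ → IsRay G r₂ → RayEquiv G r₁ r₂

/-- A family of pairwise (vertex-)disjoint rays. -/
def DisjointRays {V : Type} {ι : Type} (f : ι → ℕ → V) : Prop :=
  Pairwise fun i j => Disjoint (Set.range (f i)) (Set.range (f j))

/-- The end represented by `ω` has vertex degree `k`: the maximum cardinality of a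
family of pairwise disjoint rays belonging to the end is `k`. -/
def EndVertexDegree {V : Type} (G : SimpleGraph V) (ω : ℕ → V) (k : ℕ) : Prop :=
  (∃ f : Fin k → ℕ → V, (∀ i, InEnd G ω (f i)) ∧ DisjointRays f) ∧
  ¬ ∃ f : Fin (k + 1) → ℕ → V, (∀ i, InEnd G ω (f i)) ∧ DisjointRays f

/-- `v` dominates the end represented by `ω`: for every ray `r` in the end there are
infinitely many `v`–`r` paths pairwise meeting only in `v`. -/
def Dominates {V : Type} (G : SimpleGraph V) (v : V) (ω : ℕ → V) : Prop :=
  ∀ r : ℕ → V, InEnd G ω r →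
    ∃ (t : ℕ → ℕ) (P : (n : ℕ) → G.Walk v (r (t n))),
      Function.Injective t ∧
      (∀ n, (P n).IsPath) ∧
      (∀ n, ∀ u ∈ (P n).support, u ∈ Set.range r → u = r (t n)) ∧
      (∀ m n, m ≠ n → ∀ u, u ∈ (P m).support → u ∈ (P n).support → u = v)

/-- The end represented by `ω` is undominated. -/
def Undominated {V : Type} (G : SimpleGraph V) (ω : ℕ → V) : Prop :=
  ¬ ∃ v, Dominates G v ω

/-- `(A, B)` is a separation of `G`. -/
def IsSeparation {V : Type} (G : SimpleGraph V) (A B : Set V) : Prop :=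
  A ∪ B = Set.univ ∧ ∀ a ∈ A \ B, ∀ b ∈ B \ A, ¬ G.Adj a b

/-- The order of a separation `(A, B)`, i.e. `|A ∩ B|` as an extended natural number. -/
noncomputable def SepOrder {V : Type} (A B : Set V) : ℕ∞ := (A ∩ B).encard

/-- The end represented by `ω` lies in the side `B`: every ray of the end has all
but finitely many vertices in `B`. -/
def LiesIn {V : Type} (G : SimpleGraph V) (ω : ℕ → V) (B : Set V) : Prop :=
  ∀ r, InEnd G ω r → ∃ m, ∀ n, m ≤ n → r n ∈ B

/-- The vertex set `s` is connected in `G` (any two of its vertices are joined by a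
walk inside `s`). -/
def ConnectedIn {V : Type} (G : SimpleGraph V) (s : Set V) : Prop :=
  ∀ a ∈ s, ∀ b ∈ s, ∃ w : G.Walk a b, ∀ v ∈ w.support, v ∈ s

/-- `(A, B)` is an ω-relevant separation (for the end of vertex degree `k`
represented by the ray `ω`). -/
def Relevant {V : Type} (G : SimpleGraph V) (ω : ℕ → V) (k : ℕ) (A B : Set V) : Prop :=
  IsSeparation G A B ∧ SepOrder A B = (k : ℕ∞) ∧
  ConnectedIn G (A \ B) ∧
  (∀ v ∈ A ∩ B, ∃ u ∈ A \ B, G.Adj v u) ∧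
  LiesIn G ω B ∧
  ¬ ∃ C D : Set V, IsSeparation G C D ∧ SepOrder C D < (k : ℕ∞) ∧ A ⊆ C ∧ LiesIn G ω D

/-- Two separations `(A, B)` and `(C, D)` are nested. -/
def Nested {V : Type} (A B C D : Set V) : Prop :=
  (A ⊆ C ∧ D ⊆ B) ∨ (A ⊆ D ∧ C ⊆ B) ∨ (B ⊆ C ∧ D ⊆ A) ∨ (B ⊆ D ∧ C ⊆ A)

/-- `α` is the canonical rank function on the set of ω-relevant separations, ordered by
`(C,D) ≤ (A,B) ↔ C ⊆ A ∧ B ⊆ D`: the value `α (A,B)` is the least ordinal strictly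
greater than `α (C,D)` for every ω-relevant `(C,D) < (A,B)`. -/
def AlphaSpec {V : Type} (G : SimpleGraph V) (ω : ℕ → V) (k : ℕ)
    (α : Set V → Set V → Ordinal) : Prop :=
  ∀ A B : Set V, Relevant G ω k A B →
    IsLeast {β : Ordinal | ∀ C D : Set V, Relevant G ω k C D →
      C ⊆ A → B ⊆ D → (C, D) ≠ (A, B) → α C D < β} (α A B)

/-- `α(v)`: the supremum of `α (A,B)` over ω-relevant separations with `v ∈ A ∩ B`
(`0` if there is no such separation). -/
noncomputable def alphaV {V : Type} (G : SimpleGraph V) (ω : ℕ → V) (k : ℕ)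
    (α : Set V → Set V → Ordinal) (v : V) : Ordinal :=
  sSup {o : Ordinal | ∃ A B : Set V, Relevant G ω k A B ∧ v ∈ A ∩ B ∧ o = α A B}


/-! ### Auxiliary machinery for the proof of Statement 12 -/

section Aux

open SimpleGraph

variable {V : Type} {G : SimpleGraph V}

private lemma mem_left_of_union_eq_univ {A B : Set V} (h : A ∪ B = Set.univ) {z : V}
    (hz : z ∉ B) : z ∈ A := by
  have hz2 : z ∈ A ∪ B := h ▸ Set.mem_univ z
  rcases hz2 with h' | h'
  · exact h'
  · exact absurd h' hz

/-- A walk from a vertex of `A \ B` to a vertex of `B` must meet `A ∩ B`. -/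
private lemma walk_crosses {A B : Set V} (hsep : IsSeparation G A B) :
    ∀ {a b : V} (w : G.Walk a b), a ∈ A → a ∉ B → b ∈ B →
      ∃ x ∈ w.support, x ∈ A ∧ x ∈ B := by
  intro a b w
  induction w with
  | nil => intro _ ha' hb; exact absurd hb ha'
  | @cons u c d hadj p ih =>
    intro ha ha' hb
    by_cases hcB : c ∈ B
    · by_cases hcA : c ∈ A
      · exact ⟨c, by simp [SimpleGraph.Walk.support_cons], hcA, hcB⟩
      · exact absurd hadj (hsep.2 u ⟨ha, ha'⟩ c ⟨hcB, hcA⟩)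
    · have hcA : c ∈ A := mem_left_of_union_eq_univ hsep.1 hcB
      obtain ⟨x, hx, hxA, hxB⟩ := ih hcA hcB hb
      exact ⟨x, by simp [SimpleGraph.Walk.support_cons, hx], hxA, hxB⟩

private lemma ray_walk {r : ℕ → V} (hr : ∀ n, G.Adj (r n) (r (n + 1))) (m : ℕ) :
    ∀ d : ℕ, ∃ w : G.Walk (r m) (r (m + d)),
      ∀ x ∈ w.support, ∃ j, m ≤ j ∧ j ≤ m + d ∧ x = r j := by
  intro d
  induction d with
  | zero =>
    refine ⟨SimpleGraph.Walk.nil, ?_⟩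
    intro x hx
    simp only [SimpleGraph.Walk.support_nil, List.mem_singleton] at hx
    exact ⟨m, le_rfl, by omega, hx⟩
  | succ d ih =>
    obtain ⟨w, hw⟩ := ih
    refine ⟨w.concat (hr (m + d)), ?_⟩
    intro x hx
    rw [SimpleGraph.Walk.support_concat, List.mem_append] at hx
    rcases hx with hx | hx
    · obtain ⟨j, h1, h2, h3⟩ := hw x hx
      exact ⟨j, h1, by omega, h3⟩
    · simp only [List.mem_singleton] at hx
      exact ⟨m + d + 1, by omega, by omega, hx⟩

private lemma ro_refl {S : Set V} {a : V} (ha : a ∉ S) : ReachableOutside G S a a :=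
  ⟨SimpleGraph.Walk.nil, by
    intro v hv
    simp only [SimpleGraph.Walk.support_nil, List.mem_singleton] at hv
    exact hv ▸ ha⟩

private lemma ro_symm {S : Set V} {a b : V} (h : ReachableOutside G S a b) :
    ReachableOutside G S b a := by
  obtain ⟨w, hw⟩ := h
  exact ⟨w.reverse, fun v hv => hw v (by
    rwa [SimpleGraph.Walk.support_reverse, List.mem_reverse] at hv)⟩

private lemma ro_trans {S : Set V} {a b c : V} (h1 : ReachableOutside G S a b)
    (h2 : ReachableOutside G S b c) : ReachableOutside G S a c := by
  obtain ⟨w1, hw1⟩ := h1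
  obtain ⟨w2, hw2⟩ := h2
  refine ⟨w1.append w2, fun v hv => ?_⟩
  rw [SimpleGraph.Walk.mem_support_append_iff] at hv
  rcases hv with hv | hv
  · exact hw1 v hv
  · exact hw2 v hv

private lemma ro_mono {S S' : Set V} (hss : S' ⊆ S) {a b : V}
    (h : ReachableOutside G S a b) : ReachableOutside G S' a b := by
  obtain ⟨w, hw⟩ := h
  exact ⟨w, fun v hv hvS => hw v hv (hss hvS)⟩

private lemma ro_step {S : Set V} {a b c : V} (h : ReachableOutside G S a b)
    (hadj : G.Adj b c) (hc : c ∉ S) : ReachableOutside G S a c := by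
  refine ro_trans h ⟨SimpleGraph.Walk.cons hadj SimpleGraph.Walk.nil, ?_⟩
  intro v hv
  simp only [SimpleGraph.Walk.support_cons, SimpleGraph.Walk.support_nil,
    List.mem_cons, List.mem_singleton, List.not_mem_nil, or_false] at hv
  rcases hv with rfl | rfl
  · obtain ⟨w, hw⟩ := h
    exact hw v w.end_mem_support
  · exact hc

private lemma ray_ro {r : ℕ → V} (hr : ∀ n, G.Adj (r n) (r (n + 1))) {S : Set V}
    {m n : ℕ} (h : ∀ j, m ≤ j → r j ∉ S) (hmn : m ≤ n) :
    ReachableOutside G S (r m) (r n) := by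
  obtain ⟨d, rfl⟩ := Nat.exists_eq_add_of_le hmn
  obtain ⟨w, hw⟩ := ray_walk hr m d
  refine ⟨w, fun x hx => ?_⟩
  obtain ⟨j, hj1, _, rfl⟩ := hw x hx
  exact h j hj1

/-- The set of vertices reachable from `y` by walks avoiding `W`. -/
private def Reach (G : SimpleGraph V) (W : Set V) (y : V) : Set V :=
  {z | ReachableOutside G W y z}

/-- If one ray of the end enters `Reach G W y` infinitely often, every ray of the end
enters it at arbitrarily late positions. -/
private lemma deep_transfer {ω : ℕ → V} (hω : IsRay G ω) {W : Set V} (hWfin : W.Finite)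
    {y : V} {r₀ : ℕ → V} (h₀ : InEnd G ω r₀)
    (hdeep : {m | r₀ m ∈ Reach G W y}.Infinite)
    {g : ℕ → V} (hg : InEnd G ω g) (N : ℕ) :
    ∃ m, N < m ∧ g m ∈ Reach G W y := by
  classical
  set S : Set V := W ∪ (g '' Set.Iic N) with hS
  have hSfin : S.Finite := hWfin.union ((Set.finite_Iic N).image g)
  obtain ⟨m₁, n₁, ht₁, hw₁t, hro₁⟩ := h₀.2 S hSfin
  obtain ⟨m₂, n₂, ht₂, hw₂t, hro₂⟩ := hg.2 S hSfin
  have hseg : ReachableOutside G S (ω n₁) (ω n₂) := by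
    rcases le_total n₁ n₂ with h | h
    · exact ray_ro hω.2 hw₁t h
    · exact ro_symm (ray_ro hω.2 hw₂t h)
  have hmain : ReachableOutside G S (r₀ m₁) (g m₂) :=
    ro_trans hro₁ (ro_trans hseg (ro_symm hro₂))
  obtain ⟨m₃, hm₃K, hm₃ge⟩ : ∃ m₃, r₀ m₃ ∈ Reach G W y ∧ m₁ ≤ m₃ := by
    obtain ⟨m₃, hm₃, h⟩ := hdeep.exists_gt m₁
    exact ⟨m₃, hm₃, h.le⟩
  have hWS : W ⊆ S := Set.subset_union_left
  have hseg₀ : ReachableOutside G W (r₀ m₃) (r₀ m₁) :=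
    ro_mono hWS (ro_symm (ray_ro h₀.1.2 ht₁ hm₃ge))
  have hfin : ReachableOutside G W y (g m₂) :=
    ro_trans (ro_trans hm₃K hseg₀) (ro_mono hWS hmain)
  refine ⟨m₂, ?_, hfin⟩
  by_contra hle
  push_neg at hle
  exact (ht₂ m₂ le_rfl) (Or.inr ⟨m₂, hle, rfl⟩)

/-- If no ray of the end visits `Reach G W y` infinitely often, then
`(Reach ∪ W, (Reach)ᶜ)` is a small separation above `A`, contradicting relevance. -/
private lemma reach_contra {ω : ℕ → V} {k : ℕ} {A B : Set V} (hAB : Relevant G ω k A B)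
    {W : Set V} (hWord : W.encard < (k : ℕ∞)) {y : V} (hy : y ∈ A \ B) (hWX : W ⊆ A ∩ B)
    (hshallow : ∀ r, InEnd G ω r → {m | r m ∈ Reach G W y}.Finite) : False := by
  classical
  set K := Reach G W y with hK
  have hyW : y ∉ W := fun h => hy.2 (hWX h).2
  have hyK : y ∈ K := ro_refl hyW
  have hKclosed : ∀ z z', z ∈ K → G.Adj z z' → z' ∉ W → z' ∈ K :=
    fun z z' hz h hz' => ro_step hz h hz'
  apply hAB.2.2.2.2.2
  have hint : A \ B ⊆ K := by
    intro u hu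
    obtain ⟨w, hw⟩ := hAB.2.2.1 y hy u hu
    exact ⟨w, fun x hx hxW => (hw x hx).2 (hWX hxW).2⟩
  refine ⟨K ∪ W, Kᶜ, ⟨?_, ?_⟩, ?_, ?_, ?_⟩
  · apply Set.eq_univ_of_forall
    intro z
    by_cases hz : z ∈ K
    · exact Or.inl (Or.inl hz)
    · exact Or.inr hz
  · rintro a ⟨haKW, haK⟩ b ⟨hbK, hbKW⟩ hadj
    simp only [Set.mem_compl_iff, not_not] at haK
    have hbW : b ∉ W := fun h => hbKW (Or.inr h)
    exact hbK (hKclosed a b haK hadj hbW)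
  · calc SepOrder (K ∪ W) Kᶜ = ((K ∪ W) ∩ Kᶜ).encard := rfl
      _ ≤ W.encard := by
          apply Set.encard_mono
          rintro z ⟨hz1, hz2⟩
          rcases hz1 with h | h
          · exact absurd h hz2
          · exact h
      _ < (k : ℕ∞) := hWord
  · intro z hz
    by_cases hzB : z ∈ B
    · by_cases hzW : z ∈ W
      · exact Or.inr hzW
      · obtain ⟨u, hu, hadj⟩ := hAB.2.2.2.1 z ⟨hz, hzB⟩
        exact Or.inl (hKclosed u z (hint hu) hadj.symm hzW)
    · exact Or.inl (hint ⟨hz, hzB⟩)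
  · intro r hr
    have hfin := hshallow r hr
    obtain ⟨m₀, hm₀⟩ := hfin.bddAbove
    refine ⟨m₀ + 1, fun n hn => ?_⟩
    intro hnK
    have := hm₀ hnK
    omega

/-- A finite set of size `k` cannot contain a finset of more than `k` elements. -/
private lemma overflow {X : Set V} {k : ℕ} (hX : X.encard = (k : ℕ∞)) (F : Finset V)
    (hF : ↑F ⊆ X) (hcard : k < F.card) : False := by
  have h := Set.encard_mono hF
  rw [Set.encard_coe_eq_coe_finsetCard, hX] at h
  have : F.card ≤ k := by exact_mod_cast h
  omega

private lemma pigeonhole {T : Set V} (hT : T.Infinite) {ι : Type} {S : Set ι}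
    (hS : S.Finite) (P : V → ι → Prop) (h : ∀ v ∈ T, ∃ i ∈ S, P v i) :
    ∃ i ∈ S, {v ∈ T | P v i}.Infinite := by
  by_contra hc
  push_neg at hc
  have hsub : T ⊆ ⋃ i ∈ S, {v ∈ T | P v i} := by
    intro v hv
    obtain ⟨i, hi, hp⟩ := h v hv
    exact Set.mem_biUnion hi ⟨hv, hp⟩
  exact hT (Set.Finite.subset
    (hS.biUnion fun i hi => (hc i hi)) hsub)

/-- A ray which eventually lies in `B` crosses `A ∩ B` at its entry point. -/
private lemma cross_at {A B : Set V} (hsep : IsSeparation G A B) {g : ℕ → V}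
    (hg : ∀ n, G.Adj (g n) (g (n + 1))) {m : ℕ} (hm : ∀ n, m ≤ n → g n ∈ B)
    (h0 : 0 < m) (hlast : ¬ ∀ n, m - 1 ≤ n → g n ∈ B) : g m ∈ A ∩ B := by
  have h1 : g (m - 1) ∉ B := by
    by_contra h
    apply hlast
    intro n hn
    rcases eq_or_lt_of_le hn with rfl | h'
    · exact h
    · exact hm n (by omega)
  have h1A : g (m - 1) ∈ A := mem_left_of_union_eq_univ hsep.1 h1
  have hadj : G.Adj (g (m - 1)) (g m) := by
    have h2 := hg (m - 1)
    have h3 : m - 1 + 1 = m := by omega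
    rwa [h3] at h2
  have hmB : g m ∈ B := hm m le_rfl
  by_cases hmA : g m ∈ A
  · exact ⟨hmA, hmB⟩
  · exact absurd hadj (hsep.2 (g (m - 1)) ⟨h1A, h1⟩ (g m) ⟨hmB, hmA⟩)

/-- The key recursive pigeonhole argument: there is no infinite family of vertices of
`C \ D`, each lying in the separator of an ω-relevant separation whose strict `A`-side
contains a fixed vertex `y` and whose separator contains a fixed finite set `W`. -/
private lemma rec_contra {ω : ℕ → V} {k : ℕ} {C D : Set V}
    (hω : IsRay G ω) (hCD : Relevant G ω k C D)
    (f : Fin k → ℕ → V) (hf : ∀ i, InEnd G ω (f i)) (hdisj : DisjointRays f)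
    (y : V) (𝒜 ℬ : V → Set V) :
    ∀ (n : ℕ) (W : Finset V) (T : Set V), T.Infinite →
      (∀ v ∈ T, Relevant G ω k (𝒜 v) (ℬ v) ∧ v ∈ 𝒜 v ∩ ℬ v ∧ y ∈ 𝒜 v \ ℬ v ∧
        (↑W : Set V) ⊆ 𝒜 v ∩ ℬ v ∧ v ∈ C ∧ v ∉ D) →
      k ≤ W.card + n → False := by
  classical
  have immediate : ∀ (W : Finset V) (T : Set V), T.Infinite →
      (∀ v ∈ T, Relevant G ω k (𝒜 v) (ℬ v) ∧ v ∈ 𝒜 v ∩ ℬ v ∧ y ∈ 𝒜 v \ ℬ v ∧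
        (↑W : Set V) ⊆ 𝒜 v ∩ ℬ v ∧ v ∈ C ∧ v ∉ D) →
      k ≤ W.card → False := by
    intro W T hT hinv hk
    obtain ⟨v, hvT, hvW⟩ : ∃ v, v ∈ T ∧ v ∉ W := by
      obtain ⟨v, hv⟩ := (hT.diff W.finite_toSet).nonempty
      exact ⟨v, hv.1, fun h => hv.2 (by exact_mod_cast h)⟩
    obtain ⟨hrel, hvX, _, hWX, _⟩ := hinv v hvT
    refine overflow hrel.2.1 (insert v W) ?_ ?_
    · intro z hz
      simp only [Finset.coe_insert, Set.mem_insert_iff] at hz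
      rcases hz with rfl | hz
      · exact hvX
      · exact hWX hz
    · rw [Finset.card_insert_of_notMem hvW]
      omega
  intro n
  induction n with
  | zero =>
    intro W T hT hinv hk
    exact immediate W T hT hinv (by omega)
  | succ n ih =>
    intro W T hT hinv hcard
    by_cases hbig : k ≤ W.card
    · exact immediate W T hT hinv hbig
    push_neg at hbig
    obtain ⟨v₀, hv₀T⟩ := hT.nonempty
    obtain ⟨hrel₀, hv₀X, hy₀, hW₀, _⟩ := hinv v₀ hv₀T
    -- thresholds: least index from which the ray f i stays in ℬ v
    set mv : V → Fin k → ℕ := fun v i =>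
      if h : ∃ m, ∀ n', m ≤ n' → f i n' ∈ ℬ v then Nat.find h else 0 with hmvdef
    have hex : ∀ v ∈ T, ∀ i : Fin k, ∃ m, ∀ n', m ≤ n' → f i n' ∈ ℬ v :=
      fun v hv i => (hinv v hv).1.2.2.2.2.1 (f i) (hf i)
    have hmv_spec : ∀ v ∈ T, ∀ i : Fin k, ∀ n', mv v i ≤ n' → f i n' ∈ ℬ v := by
      intro v hv i n' hn'
      have h := hex v hv i
      rw [hmvdef] at hn'
      simp only [dif_pos h] at hn'
      exact Nat.find_spec h n' hn'
    have hmv_min : ∀ v ∈ T, ∀ i : Fin k, 0 < mv v i →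
        ¬ ∀ n', mv v i - 1 ≤ n' → f i n' ∈ ℬ v := by
      intro v hv i hpos
      have h := hex v hv i
      rw [hmvdef] at hpos ⊢
      simp only [dif_pos h] at hpos ⊢
      exact Nat.find_min h (by omega)
    by_cases hBnd : ∃ (i : Fin k) (M : ℕ), {v ∈ T | mv v i ≤ M}.Infinite
    · obtain ⟨i, M, hTM⟩ := hBnd
      by_cases hdeep : ∃ r, InEnd G ω r ∧ {m | r m ∈ Reach G (↑W) y}.Infinite
      · obtain ⟨r₀, hr₀, hdp⟩ := hdeep
        obtain ⟨M', hM'gt, hM'K⟩ := deep_transfer hω W.finite_toSet hr₀ hdp (hf i) M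
        obtain ⟨ρ, hρ⟩ := hM'K
        have hhit : ∀ v ∈ {v ∈ T | mv v i ≤ M}, ∃ x ∈ {x | x ∈ ρ.support},
            x ∈ 𝒜 v ∩ ℬ v := by
          rintro v ⟨hvT, hvM⟩
          obtain ⟨hrel, hvX, hyv, hWv, _⟩ := hinv v hvT
          have hz : f i M' ∈ ℬ v := hmv_spec v hvT i M' (le_trans hvM hM'gt.le)
          obtain ⟨x, hx, hxA, hxB⟩ := walk_crosses hrel.1 ρ hyv.1 hyv.2 hz
          exact ⟨x, hx, hxA, hxB⟩
        obtain ⟨w', hw's, hw'inf⟩ :=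
          pigeonhole hTM (List.finite_toSet ρ.support) (fun v x => x ∈ 𝒜 v ∩ ℬ v) hhit
        have hw'W : w' ∉ W := fun h => hρ w' hw's (by exact_mod_cast h)
        refine ih (insert w' W) {v ∈ {v ∈ T | mv v i ≤ M} | w' ∈ 𝒜 v ∩ ℬ v} hw'inf ?_ ?_
        · rintro v ⟨⟨hvT, _⟩, hvw⟩
          obtain ⟨hrel, hvX, hyv, hWv, hvC, hvD⟩ := hinv v hvT
          refine ⟨hrel, hvX, hyv, ?_, hvC, hvD⟩
          intro z hz
          simp only [Finset.coe_insert, Set.mem_insert_iff] at hz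
          rcases hz with rfl | hz
          · exact hvw
          · exact hWv hz
        · rw [Finset.card_insert_of_notMem hw'W]
          omega
      · push_neg at hdeep
        have hshallow : ∀ r, InEnd G ω r → {m | r m ∈ Reach G (↑W) y}.Finite :=
          fun r hr => (hdeep r hr)
        refine reach_contra hrel₀ ?_ hy₀ hW₀ hshallow
        rw [Set.encard_coe_eq_coe_finsetCard]
        exact_mod_cast hbig
    · push_neg at hBnd
      have hfinsets : ∀ (i : Fin k) (M : ℕ), {v ∈ T | mv v i ≤ M}.Finite :=
        fun i M => (hBnd i M)
      have hND : ∀ i : Fin k, ∃ N, ∀ n', N ≤ n' → f i n' ∈ D :=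
        fun i => hCD.2.2.2.2.1 (f i) (hf i)
      choose Nf hNf using hND
      set t : ℕ := (Finset.univ.sup Nf) + 1 with ht
      have htN : ∀ i, Nf i < t := by
        intro i
        have : Nf i ≤ Finset.univ.sup Nf := Finset.le_sup (Finset.mem_univ i)
        omega
      have hVbad : (⋃ i : Fin k, {v ∈ T | mv v i ≤ t}).Finite :=
        Set.finite_iUnion fun i => hfinsets i t
      obtain ⟨v, hvT, hvbad⟩ : ∃ v, v ∈ T ∧ v ∉ ⋃ i : Fin k, {v ∈ T | mv v i ≤ t} := by
        obtain ⟨v, hv⟩ := (hT.diff hVbad).nonempty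
        exact ⟨v, hv.1, hv.2⟩
      have hmvt : ∀ i, t < mv v i := by
        intro i
        by_contra h
        push_neg at h
        exact hvbad (Set.mem_iUnion.mpr ⟨i, hvT, h⟩)
      obtain ⟨hrel, hvX, hyv, hWv, hvC, hvD⟩ := hinv v hvT
      have hcross : ∀ i : Fin k, f i (mv v i) ∈ 𝒜 v ∩ ℬ v := by
        intro i
        exact cross_at hrel.1 (hf i).1.2 (hmv_spec v hvT i)
          (by have := hmvt i; omega) (hmv_min v hvT i (by have := hmvt i; omega))
      have hxD : ∀ i : Fin k, f i (mv v i) ∈ D := by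
        intro i
        refine hNf i _ ?_
        have h1 := hmvt i
        have h2 := htN i
        omega
      have hxv : ∀ i : Fin k, f i (mv v i) ≠ v := fun i h => hvD (h ▸ hxD i)
      have hinj : Function.Injective (fun i : Fin k => f i (mv v i)) := by
        intro i j hij
        simp only at hij
        by_contra hne
        have hd := hdisj hne
        refine Set.disjoint_left.mp hd ⟨mv v i, rfl⟩ ?_
        rw [hij]
        exact ⟨mv v j, rfl⟩
      refine overflow hrel.2.1
        (insert v (Finset.image (fun i : Fin k => f i (mv v i)) Finset.univ)) ?_ ?_
      · intro z hz
        simp only [Finset.coe_insert, Set.mem_insert_iff, Finset.coe_image,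
          Set.mem_image, Finset.mem_coe, Finset.mem_univ, true_and] at hz
        rcases hz with rfl | ⟨i, _, rfl⟩
        · exact hvX
        · exact hcross i
      · have hnm : v ∉ Finset.image (fun i : Fin k => f i (mv v i)) Finset.univ := by
          intro h
          obtain ⟨i, _, hi⟩ := Finset.mem_image.mp h
          exact hxv i hi
        rw [Finset.card_insert_of_notMem hnm,
          Finset.card_image_of_injective _ hinj]
        simp

end Aux
/-- for every ω-relevant separation `(C,D)`, all but finitely many
vertices `v ∈ C` satisfy `α(v) ≤ α(C,D)`. -/
theorem alpha_le_for_cofinitely_many {V : Type} (G : SimpleGraph V) (ω : ℕ → V) (k : ℕ)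
    (hray : IsRay G ω) (hone : ∀ r, IsRay G r → RayEquiv G r ω)
    (hundom : Undominated G ω) (hdeg : EndVertexDegree G ω k)
    (α : Set V → Set V → Ordinal) (hα : AlphaSpec G ω k α)
    (C D : Set V) (hCD : Relevant G ω k C D) :
    {v : V | v ∈ C ∧ ¬ alphaV G ω k α v ≤ α C D}.Finite := by
  classical
  rw [← Set.not_infinite]
  intro hinf
  have hYfin : (C ∩ D).Finite := Set.finite_of_encard_eq_coe hCD.2.1
  have hT₀ : ({v : V | v ∈ C ∧ ¬ alphaV G ω k α v ≤ α C D} \ (C ∩ D)).Infinite :=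
    hinf.diff hYfin
  have hQ : ∀ v ∈ {v : V | v ∈ C ∧ ¬ alphaV G ω k α v ≤ α C D} \ (C ∩ D),
      ∃ y ∈ C ∩ D, ∃ A B : Set V, Relevant G ω k A B ∧ v ∈ A ∩ B ∧ y ∈ A \ B := by
    rintro v ⟨⟨hvC, hvα⟩, hvY⟩
    have hvD : v ∉ D := fun h => hvY ⟨hvC, h⟩
    have hub : ∃ o ∈ {o : Ordinal |
        ∃ A B : Set V, Relevant G ω k A B ∧ v ∈ A ∩ B ∧ o = α A B}, α C D < o := by
      by_contra h
      push_neg at h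
      apply hvα
      unfold alphaV
      exact csSup_le' fun o ho => h o ho
    obtain ⟨o, ⟨A, B, hAB, hvX, rfl⟩, hlt⟩ := hub
    have hnle : ¬(A ⊆ C ∧ D ⊆ B) := by
      rintro ⟨h1, h2⟩
      have hle : α A B ≤ α C D := by
        by_cases hpair : ((A, B) : Set V × Set V) = (C, D)
        · rw [Prod.mk.injEq] at hpair
          rw [hpair.1, hpair.2]
        · exact le_of_lt ((hα C D hCD).1 A B hAB h1 h2 hpair)
      exact absurd hlt (not_lt.mpr hle)
    have hintD : ∃ a, a ∈ A \ B ∧ a ∈ D := by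
      by_contra h
      push_neg at h
      apply hnle
      have hXC : ∀ x ∈ A ∩ B, x ∈ C := by
        intro x hx
        obtain ⟨u, hu, hadj⟩ := hAB.2.2.2.1 x hx
        have huD : u ∉ D := h u hu
        have huC : u ∈ C := mem_left_of_union_eq_univ hCD.1.1 huD
        by_contra hxC
        have hxD : x ∈ D := by
          have hx2 : x ∈ C ∪ D := hCD.1.1 ▸ Set.mem_univ x
          rcases hx2 with h' | h'
          · exact absurd h' hxC
          · exact h'
        exact hCD.1.2 u ⟨huC, huD⟩ x ⟨hxD, hxC⟩ hadj.symm
      constructor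
      · intro z hz
        by_cases hzB : z ∈ B
        · exact hXC z ⟨hz, hzB⟩
        · exact mem_left_of_union_eq_univ hCD.1.1 (h z ⟨hz, hzB⟩)
      · intro d hd
        by_contra hdB
        exact h d ⟨mem_left_of_union_eq_univ hAB.1.1 hdB, hdB⟩ hd
    obtain ⟨a, haAB, haD⟩ := hintD
    obtain ⟨u, hu, hadj⟩ := hAB.2.2.2.1 v hvX
    have huC : u ∈ C := by
      by_contra huC
      have huD : u ∈ D := by
        have hu2 : u ∈ C ∪ D := hCD.1.1 ▸ Set.mem_univ u
        rcases hu2 with h' | h'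
        · exact absurd h' huC
        · exact h'
      exact hCD.1.2 v ⟨hvC, hvD⟩ u ⟨huD, huC⟩ hadj
    by_cases huD : u ∈ D
    · exact ⟨u, ⟨huC, huD⟩, A, B, hAB, hvX, hu⟩
    · obtain ⟨w, hw⟩ := hAB.2.2.1 u hu a haAB
      obtain ⟨z, hzsupp, hzC, hzD⟩ := walk_crosses hCD.1 w huC huD haD
      exact ⟨z, ⟨hzC, hzD⟩, A, B, hAB, hvX, hw z hzsupp⟩
  obtain ⟨y, hyY, hTy⟩ := pigeonhole hT₀ hYfin
    (fun v y => ∃ A B : Set V, Relevant G ω k A B ∧ v ∈ A ∩ B ∧ y ∈ A \ B) hQ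
  set Q : V → Prop :=
    fun v => ∃ A B : Set V, Relevant G ω k A B ∧ v ∈ A ∩ B ∧ y ∈ A \ B with hQdef
  set 𝒜 : V → Set V := fun v => if h : Q v then h.choose else ∅ with h𝒜
  set ℬ : V → Set V := fun v => if h : Q v then h.choose_spec.choose else ∅ with hℬ
  have hprops : ∀ v, Q v →
      Relevant G ω k (𝒜 v) (ℬ v) ∧ v ∈ 𝒜 v ∩ ℬ v ∧ y ∈ 𝒜 v \ ℬ v := by
    intro v hv
    rw [h𝒜, hℬ]
    simp only [dif_pos hv]
    exact hv.choose_spec.choose_spec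
  obtain ⟨f, hf, hdisj⟩ := hdeg.1
  refine rec_contra hray hCD f hf hdisj y 𝒜 ℬ k ∅ _ hTy ?_ (by simp)
  rintro v ⟨⟨⟨hvC, _⟩, hvY⟩, hQv⟩
  obtain ⟨h1, h2, h3⟩ := hprops v hQv
  exact ⟨h1, h2, h3, by simp, hvC, fun h => hvY ⟨hvC, h⟩⟩

end PaperEnds
end

section
/- Let G be a connected graph and ω an end of G having finite vertex degree. Then there are only finitely many vertices of G that dominate ω. -/
open Set Cardinal

namespace PaperEnds

variable {V : Type} {G : SimpleGraph V}

lemma getVert_mem_support {u v : V} (p : G.Walk u v) {i : ℕ} (hi : i ≤ p.length) :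
    p.getVert i ∈ p.support :=
  SimpleGraph.Walk.mem_support_iff_exists_getVert.2 ⟨i, rfl, hi⟩

lemma getVert_inj {u v : V} {p : G.Walk u v} (hp : p.IsPath) :
    ∀ {i j : ℕ}, i ≤ p.length → j ≤ p.length → p.getVert i = p.getVert j → i = j := by
  induction p with
  | nil => intro i j hi hj _; simp only [SimpleGraph.Walk.length_nil, Nat.le_zero] at hi hj; omega
  | cons h q ih =>
    intro i j hi hj hij
    rw [SimpleGraph.Walk.cons_isPath_iff] at hp
    match i, j with
    | 0, 0 => rfl
    | 0, j+1 =>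
      exfalso; apply hp.2
      rw [SimpleGraph.Walk.getVert_zero, SimpleGraph.Walk.getVert_cons_succ] at hij
      rw [hij]
      exact getVert_mem_support _ (by simpa using hj)
    | i+1, 0 =>
      exfalso; apply hp.2
      rw [SimpleGraph.Walk.getVert_zero, SimpleGraph.Walk.getVert_cons_succ] at hij
      rw [← hij]
      exact getVert_mem_support _ (by simpa using hi)
    | i+1, j+1 =>
      rw [SimpleGraph.Walk.getVert_cons_succ, SimpleGraph.Walk.getVert_cons_succ] at hij
      have := ih hp.1 (by simpa using hi) (by simpa using hj) hij
      omega

lemma isPath_append {u v w : V} {p : G.Walk u v} {q : G.Walk v w}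
    (hp : p.IsPath) (hq : q.IsPath) (hpq : ∀ x ∈ p.support, x ∈ q.support → x = v) :
    (p.append q).IsPath := by
  rw [SimpleGraph.Walk.isPath_def, SimpleGraph.Walk.support_append]
  have hq' : q.support = v :: q.support.tail := q.support_eq_cons
  have hqn : q.support.Nodup := hq.support_nodup
  rw [hq'] at hqn
  refine List.Nodup.append hp.support_nodup hqn.of_cons ?_
  intro x hx hx'
  have : x = v := hpq x hx (by rw [hq']; exact List.mem_cons_of_mem _ hx')
  subst this
  exact (List.nodup_cons.1 hqn).1 hx'

lemma pos_length_of_ne {u v : V} (p : G.Walk u v) (h : u ≠ v) : 0 < p.length := by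
  cases p with
  | nil => exact absurd rfl h
  | cons _ _ => simp

/-- Walk along a ray from index `a`, of length `l`. -/
def walkAlong (r : ℕ → V) (hadj : ∀ n, G.Adj (r n) (r (n + 1))) (a : ℕ) :
    (l : ℕ) → G.Walk (r a) (r (a + l))
  | 0 => SimpleGraph.Walk.nil
  | l + 1 => (walkAlong r hadj a l).concat (hadj (a + l))

lemma walkAlong_support (r : ℕ → V) (hadj : ∀ n, G.Adj (r n) (r (n + 1))) (a l : ℕ) :
    (walkAlong (G := G) r hadj a l).support = (List.range (l + 1)).map (fun i => r (a + i)) := by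
  induction l with
  | zero => simp [walkAlong, List.range_succ]
  | succ l ih =>
    rw [walkAlong, SimpleGraph.Walk.support_concat, ih, List.range_succ (n := l + 1)]
    simp

lemma walkAlong_length (r : ℕ → V) (hadj : ∀ n, G.Adj (r n) (r (n + 1))) (a l : ℕ) :
    (walkAlong (G := G) r hadj a l).length = l := by
  induction l with
  | zero => rfl
  | succ l ih => rw [walkAlong, SimpleGraph.Walk.length_concat, ih]

lemma walkAlong_isPath (r : ℕ → V) (hadj : ∀ n, G.Adj (r n) (r (n + 1)))
    (hr : Function.Injective r) (a l : ℕ) :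
    (walkAlong (G := G) r hadj a l).IsPath := by
  rw [SimpleGraph.Walk.isPath_def, walkAlong_support]
  exact List.nodup_range.map fun i j hij => by
    have := hr hij; omega
  
lemma mem_walkAlong_support_iff (r : ℕ → V) (hadj : ∀ n, G.Adj (r n) (r (n + 1))) (a l : ℕ)
    {x : V} : x ∈ (walkAlong (G := G) r hadj a l).support ↔ ∃ i, a ≤ i ∧ i ≤ a + l ∧ x = r i := by
  rw [walkAlong_support]
  simp only [List.mem_map, List.mem_range]
  constructor
  · rintro ⟨i, hi, rfl⟩; exact ⟨a + i, by omega, by omega, rfl⟩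
  · rintro ⟨i, h1, h2, rfl⟩; exact ⟨i - a, by omega, by rw [Nat.add_sub_cancel' h1]⟩


/-! ### Setup: infinitely many dominating vertices with fans to ω -/

structure Setup (G : SimpleGraph V) (ω : ℕ → V) (k : ℕ) : Type where
  d : ℕ → V
  hd : Function.Injective d
  hdo : ∀ i, d i ∉ Set.range ω
  T : ℕ → ℕ → ℕ
  P : ∀ i n, G.Walk (d i) (ω (T i n))
  hT : ∀ i, Function.Injective (T i)
  hP : ∀ i n, (P i n).IsPath
  hPo : ∀ i n, ∀ u ∈ (P i n).support, u ∈ Set.range ω → u = ω (T i n)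
  hPd : ∀ i m n, m ≠ n → ∀ u, u ∈ (P i m).support → u ∈ (P i n).support → u = d i

variable {ω : ℕ → V} {k : ℕ}

lemma Setup.avoid (S : Setup G ω k) (i : ℕ) {F : Set V} (hF : F.Finite) (N : ℕ) :
    ∃ m, N < S.T i m ∧ ∀ u ∈ (S.P i m).support, u ∈ F → u = S.d i := by
  have h1 : (S.T i ⁻¹' Set.Iic N).Finite :=
    Set.Finite.preimage ((S.hT i).injOn) (Set.finite_Iic N)
  have h2 : {m | ∃ u ∈ F, u ≠ S.d i ∧ u ∈ (S.P i m).support}.Finite := by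
    refine Set.Finite.subset (Set.Finite.biUnion hF
      (fun u _ => ?_ : ∀ u ∈ F, {m | u ≠ S.d i ∧ u ∈ (S.P i m).support}.Finite)) ?_
    · refine Set.Subsingleton.finite fun m1 hm1 m2 hm2 => ?_
      by_contra hne
      exact hm1.1 (S.hPd i m1 m2 hne u hm1.2 hm2.2)
    · rintro m ⟨u, hu, h⟩
      exact Set.mem_biUnion hu h
  obtain ⟨m, hm⟩ := (h1.union h2).infinite_compl.nonempty
  simp only [Set.mem_compl_iff, Set.mem_union, not_or, Set.mem_preimage, Set.mem_Iic,
    Set.mem_setOf_eq, not_exists, not_and] at hm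
  refine ⟨m, by omega, fun u hu huF => ?_⟩
  by_contra hne
  exact hm.2 u huF hne hu

lemma Setup.fresh (S : Setup G ω k) {F : Set V} (hF : F.Finite) : ∃ i, S.d i ∉ F := by
  obtain ⟨i, hi⟩ := (hF.preimage S.hd.injOn).infinite_compl.nonempty
  exact ⟨i, hi⟩

/-! ### The construction state -/

structure St (S : Setup G ω k) : Type where
  W : Fin (k+1) → Σ a : V, Σ b : V, G.Walk a b
  stopIdx : Fin (k+1) → ℕ
  N : ℕ
  hstop : ∀ j, (W j).2.1 = S.d (stopIdx j)
  hpath : ∀ j, (W j).2.2.IsPath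
  hdisj : ∀ j j', j ≠ j' → ∀ u, u ∈ (W j).2.2.support → u ∈ (W j').2.2.support → False
  hNle : ∀ j, ∀ u ∈ (W j).2.2.support, ∀ n, u = ω n → n ≤ N

def Extends {S : Setup G ω k} (s s' : St S) (j : Fin (k+1)) : Prop :=
  (∀ j', j' ≠ j → s'.W j' = s.W j') ∧ s.N < s'.N ∧
  ∃ (b' : V) (B : G.Walk (s.W j).2.1 b'),
    s'.W j = ⟨(s.W j).1, b', (s.W j).2.2.append B⟩ ∧ 0 < B.length ∧
    ∃ n, s.N < n ∧ ω n ∈ B.support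

lemma exists_extend (S : Setup G ω k) (hω : IsRay G ω) (s : St S) (j : Fin (k+1)) :
    ∃ s' : St S, Extends s s' j := by

  set F : Set V := ⋃ j', {u | u ∈ (s.W j').2.2.support} with hFdef
  have hFfin : F.Finite := Set.finite_iUnion fun j' => (s.W j').2.2.support.finite_toSet
  have hFmem : ∀ j' u, u ∈ (s.W j').2.2.support → u ∈ F := fun j' u hu =>
    Set.mem_iUnion.2 ⟨j', hu⟩
  obtain ⟨m, hm1, hm2⟩ := S.avoid (s.stopIdx j) hFfin s.N
  set i₀ := s.stopIdx j with hi₀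
  set t₁ := S.T i₀ m with ht₁
  set P₁ := S.P i₀ m with hP₁
  have hFP : (F ∪ {u | u ∈ P₁.support}).Finite := hFfin.union P₁.support.finite_toSet
  obtain ⟨i', hi'⟩ := S.fresh hFP
  obtain ⟨m', hm'1, hm'2⟩ := S.avoid i' hFP t₁
  set t₂ := S.T i' m' with ht₂
  set P₂ := S.P i' m' with hP₂
  have ht12 : t₁ ≤ t₂ := le_of_lt hm'1
  have hseg_e : ω (t₁ + (t₂ - t₁)) = ω t₂ := by rw [Nat.add_sub_cancel' ht12]
  set seg : G.Walk (ω t₁) (ω t₂) := (walkAlong ω hω.2 t₁ (t₂ - t₁)).copy rfl hseg_e with hseg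
  have hsegmem : ∀ x ∈ seg.support, ∃ n, t₁ ≤ n ∧ n ≤ t₂ ∧ x = ω n := by
    intro x hx
    rw [hseg, SimpleGraph.Walk.support_copy, mem_walkAlong_support_iff] at hx
    obtain ⟨n, h1, h2, h3⟩ := hx
    exact ⟨n, h1, by omega, h3⟩
  set B₀ : G.Walk (S.d i₀) (S.d i') := P₁.append (seg.append P₂.reverse) with hB₀
  have hB₀mem : ∀ u ∈ B₀.support,
      u ∈ P₁.support ∨ u ∈ seg.support ∨ u ∈ P₂.support := by
    intro u hu
    rw [hB₀, SimpleGraph.Walk.mem_support_append_iff,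
      SimpleGraph.Walk.mem_support_append_iff, SimpleGraph.Walk.support_reverse,
      List.mem_reverse] at hu
    tauto
  -- B₀ is a path
  have hP₂supp : ∀ x, x ∈ P₂.reverse.support ↔ x ∈ P₂.support := by
    intro x; rw [SimpleGraph.Walk.support_reverse, List.mem_reverse]
  have h23 : (seg.append P₂.reverse).IsPath := by
    refine isPath_append ?_ ((S.hP i' m').reverse) ?_
    · rw [hseg, SimpleGraph.Walk.isPath_copy]
      exact walkAlong_isPath ω hω.2 hω.1 t₁ (t₂ - t₁)
    · intro x hx hx'
      obtain ⟨n, _, _, rfl⟩ := hsegmem x hx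
      exact S.hPo i' m' _ ((hP₂supp _).1 hx') ⟨n, rfl⟩
  have hB₀path : B₀.IsPath := by
    refine isPath_append (S.hP i₀ m) h23 ?_
    intro x hx hx'
    rw [SimpleGraph.Walk.mem_support_append_iff] at hx'
    rcases hx' with hx' | hx'
    · obtain ⟨n, _, _, rfl⟩ := hsegmem x hx'
      exact S.hPo i₀ m _ hx ⟨n, rfl⟩
    · exfalso
      have hxd : x = S.d i' := hm'2 x ((hP₂supp _).1 hx') (Or.inr hx)
      exact hi' (hxd ▸ (Or.inr hx : x ∈ F ∪ {u | u ∈ P₁.support}))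
  -- B₀ avoids F except at its start
  have h_avoid : ∀ u ∈ B₀.support, u ∈ F → u = S.d i₀ := by
    intro u hu huF
    rcases hB₀mem u hu with h | h | h
    · exact hm2 u h huF
    · exfalso
      obtain ⟨n, hn1, _, rfl⟩ := hsegmem u h
      obtain ⟨j', hj'⟩ := Set.mem_iUnion.1 huF
      have := s.hNle j' _ hj' n rfl
      omega
    · exfalso
      have : u = S.d i' := hm'2 u h (Or.inl huF)
      exact hi' (this ▸ (Or.inl huF : u ∈ F ∪ {u | u ∈ P₁.support}))
  -- all ω-indices in B₀ are ≤ t₂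
  have hbound : ∀ u ∈ B₀.support, ∀ n, u = ω n → n ≤ t₂ := by
    intro u hu n hn
    rcases hB₀mem u hu with h | h | h
    · have : u = ω t₁ := S.hPo i₀ m u h ⟨n, hn.symm⟩
      have : n = t₁ := hω.1 (by rw [← hn, this])
      omega
    · obtain ⟨n', _, hn2', he⟩ := hsegmem u h
      have : n = n' := hω.1 (by rw [← hn, he])
      omega
    · have : u = ω t₂ := S.hPo i' m' u h ⟨n, hn.symm⟩
      have : n = t₂ := hω.1 (by rw [← hn, this])
      omega
  have hlen : 0 < B₀.length := by
    rw [hB₀, SimpleGraph.Walk.length_append]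
    have : 0 < P₁.length :=
      pos_length_of_ne P₁ (fun h => S.hdo i₀ (h ▸ ⟨t₁, rfl⟩))
    omega
  have hhit : ω t₁ ∈ B₀.support := by
    rw [hB₀, SimpleGraph.Walk.mem_support_append_iff]
    exact Or.inl (SimpleGraph.Walk.end_mem_support P₁)
  -- the copied block
  set B : G.Walk (s.W j).2.1 (S.d i') := B₀.copy (s.hstop j).symm rfl with hBdef
  have hBsupp : B.support = B₀.support := SimpleGraph.Walk.support_copy _ _ _
  have hnewpath : ((s.W j).2.2.append B).IsPath := by
    refine isPath_append (s.hpath j) (by rw [hBdef, SimpleGraph.Walk.isPath_copy]; exact hB₀path) ?_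
    intro x hx hx'
    rw [hBsupp] at hx'
    rw [h_avoid x hx' (hFmem j x hx)]
    exact (s.hstop j).symm
  -- key fact: a vertex of B other than the junction lies in no old walk
  have hBnotold : ∀ u ∈ B₀.support, ∀ j', u ∈ (s.W j').2.2.support → u ∈ (s.W j).2.2.support := by
    intro u hu j' hj'
    have : u = S.d i₀ := h_avoid u hu (hFmem j' u hj')
    rw [this, ← s.hstop j]
    exact SimpleGraph.Walk.end_mem_support _
  have e1 : Function.update s.W j ⟨(s.W j).1, S.d i', (s.W j).2.2.append B⟩ j
      = ⟨(s.W j).1, S.d i', (s.W j).2.2.append B⟩ := Function.update_self _ _ _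
  have e2 : ∀ j₁ : Fin (k+1), j₁ ≠ j →
      Function.update s.W j ⟨(s.W j).1, S.d i', (s.W j).2.2.append B⟩ j₁ = s.W j₁ :=
    fun j₁ h => Function.update_of_ne h _ _
  have e3 : Function.update s.stopIdx j i' j = i' := Function.update_self _ _ _
  have e4 : ∀ j₁ : Fin (k+1), j₁ ≠ j → Function.update s.stopIdx j i' j₁ = s.stopIdx j₁ :=
    fun j₁ h => Function.update_of_ne h _ _
  have hmemnew : ∀ u : V,
      u ∈ (Function.update s.W j ⟨(s.W j).1, S.d i', (s.W j).2.2.append B⟩ j).2.2.support →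
      u ∈ (s.W j).2.2.support ∨ u ∈ B₀.support := by
    intro u hu
    rw [e1] at hu
    have hu' : u ∈ ((s.W j).2.2.append B).support := hu
    rw [SimpleGraph.Walk.mem_support_append_iff] at hu'
    rcases hu' with h | h
    · exact Or.inl h
    · exact Or.inr (hBsupp ▸ h)
  refine ⟨⟨Function.update s.W j ⟨(s.W j).1, S.d i', (s.W j).2.2.append B⟩,
      Function.update s.stopIdx j i', t₂, ?_, ?_, ?_, ?_⟩, ?_, ?_, ?_⟩
  · intro j'
    by_cases h : j' = j
    · subst h; rw [e1, e3]
    · rw [e2 j' h, e4 j' h]; exact s.hstop j'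
  · intro j'
    by_cases h : j' = j
    · subst h; rw [e1]; exact hnewpath
    · rw [e2 j' h]; exact s.hpath j'
  · intro j₁ j₂ hne u hu1 hu2
    by_cases h1 : j₁ = j
    · rw [h1] at hu1 hne
      by_cases h2 : j₂ = j
      · exact hne h2.symm
      · rw [e2 j₂ h2] at hu2
        rcases hmemnew u hu1 with h | h
        · exact s.hdisj j j₂ hne u h hu2
        · exact s.hdisj j j₂ hne u (hBnotold u h j₂ hu2) hu2
    · rw [e2 j₁ h1] at hu1
      by_cases h2 : j₂ = j
      · rw [h2] at hu2
        rcases hmemnew u hu2 with h | h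
        · exact s.hdisj j₁ j h1 u hu1 h
        · exact s.hdisj j₁ j h1 u hu1 (hBnotold u h j₁ hu1)
      · rw [e2 j₂ h2] at hu2
        exact s.hdisj j₁ j₂ hne u hu1 hu2
  · intro j' u hu n hn
    by_cases h : j' = j
    · rw [h] at hu
      rcases hmemnew u hu with h' | h'
      · have := s.hNle j u h' n hn; omega
      · exact hbound u h' n hn
    · rw [e2 j' h] at hu
      have := s.hNle j' u hu n hn
      omega
  · exact fun j' hj' => e2 j' hj'
  · show s.N < t₂; omega
  · refine ⟨S.d i', B, e1, ?_, ⟨t₁, hm1, ?_⟩⟩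
    · rw [hBdef, SimpleGraph.Walk.length_copy]; exact hlen
    · rw [hBsupp]; exact hhit

lemma getVert_append_le {u v w : V} (p : G.Walk u v) (q : G.Walk v w) {i : ℕ}
    (hi : i ≤ p.length) : (p.append q).getVert i = p.getVert i := by
  rw [SimpleGraph.Walk.getVert_append]
  by_cases h : i < p.length
  · rw [if_pos h]
  · have hi' : i = p.length := by omega
    rw [if_neg h, hi', Nat.sub_self, SimpleGraph.Walk.getVert_zero,
      SimpleGraph.Walk.getVert_length]

/-! ### The recursive construction -/

noncomputable def step (S : Setup G ω k) (hω : IsRay G ω) (s : St S) (j : Fin (k+1)) : St S :=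
  (exists_extend S hω s j).choose

lemma step_spec (S : Setup G ω k) (hω : IsRay G ω) (s : St S) (j : Fin (k+1)) :
    Extends s (step S hω s j) j := (exists_extend S hω s j).choose_spec

def init (S : Setup G ω k) : St S where
  W j := ⟨S.d j, S.d j, SimpleGraph.Walk.nil⟩
  stopIdx j := j
  N := 0
  hstop j := rfl
  hpath j := SimpleGraph.Walk.IsPath.nil
  hdisj := by
    intro j j' hne u hu hu'
    have h1 : u ∈ (SimpleGraph.Walk.nil (G := G) (u := S.d j)).support := hu
    have h2 : u ∈ (SimpleGraph.Walk.nil (G := G) (u := S.d j')).support := hu'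
    rw [SimpleGraph.Walk.support_nil, List.mem_singleton] at h1 h2
    exact hne (Fin.ext (S.hd (h1.symm.trans h2)))
  hNle := by
    intro j u hu n hn
    have h1 : u ∈ (SimpleGraph.Walk.nil (G := G) (u := S.d j)).support := hu
    rw [SimpleGraph.Walk.support_nil, List.mem_singleton] at h1
    exact absurd ⟨n, (h1.symm.trans hn).symm⟩ (S.hdo j)

noncomputable def st (S : Setup G ω k) (hω : IsRay G ω) : ℕ → St S
  | 0 => init S
  | n+1 => step S hω (st S hω n) ⟨n % (k+1), Nat.mod_lt _ (Nat.succ_pos k)⟩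

variable (S : Setup G ω k) (hω : IsRay G ω)

lemma st_succ (n : ℕ) :
    st S hω (n+1) = step S hω (st S hω n) ⟨n % (k+1), Nat.mod_lt _ (Nat.succ_pos k)⟩ := rfl

lemma N_lt_step (n : ℕ) : (st S hω n).N < (st S hω (n+1)).N :=
  (step_spec S hω (st S hω n) _).2.1

lemma le_N (n : ℕ) : n ≤ (st S hω n).N := by
  induction n with
  | zero => exact Nat.zero_le _
  | succ n ih => have := N_lt_step S hω n; omega

lemma support_mono_step (n : ℕ) (j : Fin (k+1)) :
    ∀ u, u ∈ ((st S hω n).W j).2.2.support → u ∈ ((st S hω (n+1)).W j).2.2.support := by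
  intro u hu
  have spec := step_spec S hω (st S hω n) ⟨n % (k+1), Nat.mod_lt _ (Nat.succ_pos k)⟩
  rw [st_succ]
  by_cases h : j = ⟨n % (k+1), Nat.mod_lt _ (Nat.succ_pos k)⟩
  · subst h
    obtain ⟨b', B, hW, _, _⟩ := spec.2.2
    rw [hW]
    exact SimpleGraph.Walk.subset_support_append_left _ _ hu
  · rw [spec.1 j h]; exact hu

lemma support_mono {m n : ℕ} (h : m ≤ n) (j : Fin (k+1)) :
    ∀ u, u ∈ ((st S hω m).W j).2.2.support → u ∈ ((st S hω n).W j).2.2.support := by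
  induction n with
  | zero =>
    intro u hu
    obtain rfl : m = 0 := Nat.le_zero.mp h
    exact hu
  | succ n ih =>
    intro u hu
    rcases Nat.lt_or_ge m (n+1) with h' | h'
    · exact support_mono_step S hω n j u (ih (by omega) u hu)
    · obtain rfl : m = n + 1 := by omega
      exact hu

lemma length_mono_step (n : ℕ) (j : Fin (k+1)) :
    ((st S hω n).W j).2.2.length ≤ ((st S hω (n+1)).W j).2.2.length := by
  have spec := step_spec S hω (st S hω n) ⟨n % (k+1), Nat.mod_lt _ (Nat.succ_pos k)⟩
  rw [st_succ]
  by_cases h : j = ⟨n % (k+1), Nat.mod_lt _ (Nat.succ_pos k)⟩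
  · subst h
    obtain ⟨b', B, hW, _, _⟩ := spec.2.2
    rw [hW]
    simp only [SimpleGraph.Walk.length_append]
    omega
  · rw [spec.1 j h]

lemma length_mono {m n : ℕ} (h : m ≤ n) (j : Fin (k+1)) :
    ((st S hω m).W j).2.2.length ≤ ((st S hω n).W j).2.2.length := by
  induction n with
  | zero =>
    obtain rfl : m = 0 := Nat.le_zero.mp h
    exact le_refl _
  | succ n ih =>
    rcases Nat.lt_or_ge m (n+1) with h' | h'
    · exact le_trans (ih (by omega)) (length_mono_step S hω n j)
    · obtain rfl : m = n + 1 := by omega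
      exact le_refl _

lemma length_lt_step (n : ℕ) (j : Fin (k+1)) (h : n % (k+1) = (j : ℕ)) :
    ((st S hω n).W j).2.2.length < ((st S hω (n+1)).W j).2.2.length := by
  have hj : (⟨n % (k+1), Nat.mod_lt _ (Nat.succ_pos k)⟩ : Fin (k+1)) = j := Fin.ext h
  subst hj
  have spec := step_spec S hω (st S hω n) ⟨n % (k+1), Nat.mod_lt _ (Nat.succ_pos k)⟩
  rw [st_succ]
  obtain ⟨b', B, hW, hB, _⟩ := spec.2.2
  rw [hW]
  simp only [SimpleGraph.Walk.length_append]
  omega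

lemma getVert_stable_step (n : ℕ) (j : Fin (k+1)) {i : ℕ}
    (hi : i ≤ ((st S hω n).W j).2.2.length) :
    ((st S hω (n+1)).W j).2.2.getVert i = ((st S hω n).W j).2.2.getVert i := by
  have spec := step_spec S hω (st S hω n) ⟨n % (k+1), Nat.mod_lt _ (Nat.succ_pos k)⟩
  rw [st_succ]
  by_cases h : j = ⟨n % (k+1), Nat.mod_lt _ (Nat.succ_pos k)⟩
  · subst h
    obtain ⟨b', B, hW, _, _⟩ := spec.2.2
    rw [hW]
    exact getVert_append_le _ _ hi
  · rw [spec.1 j h]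

lemma getVert_stable {m n : ℕ} (h : m ≤ n) (j : Fin (k+1)) {i : ℕ}
    (hi : i ≤ ((st S hω m).W j).2.2.length) :
    ((st S hω n).W j).2.2.getVert i = ((st S hω m).W j).2.2.getVert i := by
  induction n with
  | zero =>
    obtain rfl : m = 0 := Nat.le_zero.mp h
    rfl
  | succ n ih =>
    rcases Nat.lt_or_ge m (n+1) with h' | h'
    · rw [getVert_stable_step S hω n j (le_trans hi (length_mono S hω (by omega) j))]
      exact ih (by omega)
    · obtain rfl : m = n + 1 := by omega
      rfl

/-- the step index of the `(m+1)`-st extension of ray `j` -/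
def stageAt (j : Fin (k+1)) (m : ℕ) : ℕ := (j : ℕ) + (k+1) * m

lemma stageAt_mod (j : Fin (k+1)) (m : ℕ) : (stageAt j m) % (k+1) = (j : ℕ) := by
  rw [stageAt, Nat.add_mul_mod_self_left]
  exact Nat.mod_eq_of_lt j.isLt

lemma length_lb (j : Fin (k+1)) (m : ℕ) :
    m + 1 ≤ ((st S hω (stageAt j m + 1)).W j).2.2.length := by
  induction m with
  | zero =>
    have := length_lt_step S hω (stageAt j 0) j (stageAt_mod j 0)
    omega
  | succ m ih =>
    have h1 : stageAt j m + 1 ≤ stageAt j (m+1) := by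
      rw [stageAt, stageAt, Nat.mul_succ]; omega
    have h2 := length_mono S hω h1 j
    have h3 := length_lt_step S hω (stageAt j (m+1)) j (stageAt_mod j (m+1))
    omega

noncomputable def f (j : Fin (k+1)) (n : ℕ) : V :=
  ((st S hω (stageAt j n + 1)).W j).2.2.getVert n

lemma f_eval {j : Fin (k+1)} {n s : ℕ} (h : n ≤ ((st S hω s).W j).2.2.length) :
    ((st S hω s).W j).2.2.getVert n = f S hω j n := by
  have h1 : n ≤ ((st S hω (stageAt j n + 1)).W j).2.2.length := by
    have := length_lb S hω j n; omega
  rw [f]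
  rcases Nat.le_total s (stageAt j n + 1) with hle | hle
  · rw [getVert_stable S hω hle j h]
  · rw [getVert_stable S hω hle j h1]

lemma support_new (t : ℕ) (j : Fin (k+1)) (h : t % (k+1) = (j : ℕ)) :
    ∃ n, (st S hω t).N < n ∧ ω n ∈ ((st S hω (t+1)).W j).2.2.support := by
  have hj : (⟨t % (k+1), Nat.mod_lt _ (Nat.succ_pos k)⟩ : Fin (k+1)) = j := Fin.ext h
  subst hj
  have spec := step_spec S hω (st S hω t) ⟨t % (k+1), Nat.mod_lt _ (Nat.succ_pos k)⟩
  obtain ⟨b', B, hW, hB, n, hn1, hn2⟩ := spec.2.2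
  refine ⟨n, hn1, ?_⟩
  rw [st_succ, hW]
  exact SimpleGraph.Walk.subset_support_append_right _ _ hn2

lemma f_hits (j : Fin (k+1)) (M : ℕ) : ∃ i n, M ≤ i ∧ M ≤ n ∧ f S hω j i = ω n := by
  set t := stageAt j (M+1) with htdef
  obtain ⟨n, hn1, hn2⟩ := support_new S hω t j (stageAt_mod j (M+1))
  have hNt : t ≤ (st S hω t).N := le_N S hω t
  have htM : M < t := by
    have h1 : M + 1 ≤ (k+1)*(M+1) := Nat.le_mul_of_pos_left _ (Nat.succ_pos k)
    rw [htdef, stageAt]; omega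
  have hlen : M + 1 ≤ ((st S hω t).W j).2.2.length := by
    have h1 := length_lb S hω j M
    have h2 : stageAt j M + 1 ≤ t := by rw [htdef, stageAt, stageAt, Nat.mul_succ]; omega
    have h3 := length_mono S hω h2 j
    omega
  obtain ⟨i, hgi, hilen⟩ := SimpleGraph.Walk.mem_support_iff_exists_getVert.1 hn2
  refine ⟨i, n, ?_, by omega, (f_eval S hω hilen).symm.trans hgi⟩
  by_contra hiM
  push_neg at hiM
  have hstab : ((st S hω (t+1)).W j).2.2.getVert i = ((st S hω t).W j).2.2.getVert i :=
    getVert_stable_step S hω t j (by omega)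
  have hmem : ω n ∈ ((st S hω t).W j).2.2.support := by
    rw [← hgi, hstab]
    exact getVert_mem_support _ (by omega)
  have := (st S hω t).hNle j _ hmem n rfl
  omega

lemma f_isRay (j : Fin (k+1)) : IsRay G (f S hω j) := by
  constructor
  · intro a b hab
    have hma : a ≤ max a b := le_max_left a b
    have hmb : b ≤ max a b := le_max_right a b
    have hl := length_lb S hω j (max a b)
    have ha : a ≤ ((st S hω (stageAt j (max a b) + 1)).W j).2.2.length := by omega
    have hb : b ≤ ((st S hω (stageAt j (max a b) + 1)).W j).2.2.length := by omega
    rw [← f_eval S hω ha, ← f_eval S hω hb] at hab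
    exact getVert_inj ((st S hω (stageAt j (max a b) + 1)).hpath j) ha hb hab
  · intro n
    have hl := length_lb S hω j (n+1)
    have h1 : n + 1 ≤ ((st S hω (stageAt j (n+1) + 1)).W j).2.2.length := by omega
    have e1 := f_eval S hω (j := j) (s := stageAt j (n+1) + 1) (n := n) (by omega)
    have e2 := f_eval S hω (j := j) (s := stageAt j (n+1) + 1) (n := n+1) h1
    rw [← e1, ← e2]
    exact SimpleGraph.Walk.adj_getVert_succ _ (by omega)

lemma tail_avoid {r : ℕ → V} (hr : Function.Injective r) {Sv : Set V} (hS : Sv.Finite) :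
    ∃ m, ∀ i, m ≤ i → r i ∉ Sv := by
  have h : (r ⁻¹' Sv).Finite := hS.preimage hr.injOn
  obtain ⟨m, hm⟩ := h.bddAbove
  exact ⟨m+1, fun i hi hmem => by have := hm hmem; omega⟩

lemma f_rayEquiv (j : Fin (k+1)) : RayEquiv G (f S hω j) ω := by
  intro Sv hSv
  obtain ⟨m₀, hm₀⟩ := tail_avoid (f_isRay S hω j).1 hSv
  obtain ⟨n₀, hn₀⟩ := tail_avoid hω.1 hSv
  obtain ⟨i, n, hi, hn, hfi⟩ := f_hits S hω j (max m₀ n₀)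
  refine ⟨i, n, fun i' hi' => hm₀ i' (le_trans (le_trans (le_max_left _ _) hi) hi'),
    fun j' hj' => hn₀ j' (le_trans (le_trans (le_max_right _ _) hn) hj'),
    ⟨SimpleGraph.Walk.nil.copy rfl hfi, ?_⟩⟩
  intro v hv
  rw [SimpleGraph.Walk.support_copy, SimpleGraph.Walk.support_nil, List.mem_singleton] at hv
  subst hv
  exact hm₀ i (le_trans (le_max_left _ _) hi)

lemma f_disjoint : DisjointRays (fun j : Fin (k+1) => f S hω j) := by
  intro j j' hne
  rw [Set.disjoint_left]
  rintro x ⟨a, rfl⟩ ⟨b, hb⟩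
  have ha : a ≤ ((st S hω (max (stageAt j a + 1) (stageAt j' b + 1))).W j).2.2.length := by
    have h1 := length_lb S hω j a
    have h2 := length_mono S hω (le_max_left (stageAt j a + 1) (stageAt j' b + 1)) j
    omega
  have hb' : b ≤ ((st S hω (max (stageAt j a + 1) (stageAt j' b + 1))).W j').2.2.length := by
    have h1 := length_lb S hω j' b
    have h2 := length_mono S hω (le_max_right (stageAt j a + 1) (stageAt j' b + 1)) j'
    omega
  have h1 : f S hω j a ∈ ((st S hω (max (stageAt j a + 1) (stageAt j' b + 1))).W j).2.2.support := by
    rw [← f_eval S hω ha]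
    exact getVert_mem_support _ ha
  have h2 : f S hω j a ∈ ((st S hω (max (stageAt j a + 1) (stageAt j' b + 1))).W j').2.2.support := by
    have hb2 : f S hω j' b = f S hω j a := hb
    rw [← hb2, ← f_eval S hω hb']
    exact getVert_mem_support _ hb'
  exact (st S hω (max (stageAt j a + 1) (stageAt j' b + 1))).hdisj j j' hne _ h1 h2

lemma rayEquiv_self {r : ℕ → V} (hr : IsRay G r) : RayEquiv G r r := by
  intro Sv hSv
  obtain ⟨m, hm⟩ := tail_avoid hr.1 hSv
  refine ⟨m, m, fun i hi => hm i hi, fun i hi => hm i hi, ⟨SimpleGraph.Walk.nil, ?_⟩⟩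
  intro v hv
  rw [SimpleGraph.Walk.support_nil, List.mem_singleton] at hv
  subst hv
  exact hm m (le_refl m)

/-- in a connected graph, an end of finite vertex degree is dominated
by only finitely many vertices. -/
theorem finitely_many_dominating_vertices {V : Type} (G : SimpleGraph V)
    (hconn : G.Connected) (ω : ℕ → V) (hray : IsRay G ω)
    (hdeg : ∃ k : ℕ, EndVertexDegree G ω k) :
    {v : V | Dominates G v ω}.Finite := by
  classical
  by_contra hfin
  obtain ⟨k, hk⟩ := hdeg
  have hinf : {v : V | Dominates G v ω}.Infinite := hfin
  haveI := hinf.to_subtype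
  set e := Infinite.natEmbedding {v : V | Dominates G v ω} with hedef
  have hωω : InEnd G ω ω := ⟨hray, rayEquiv_self hray⟩
  choose T P hT hP hPo hPd using fun i : ℕ => (e i).2 ω hωω
  have hd : Function.Injective (fun i : ℕ => ((e i : {v : V | Dominates G v ω}) : V)) :=
    fun a b hab => e.injective (Subtype.coe_injective hab)
  have hdo : ∀ i : ℕ, ((e i : {v : V | Dominates G v ω}) : V) ∉ Set.range ω := by
    rintro i ⟨n, hn⟩
    have h0 : ((e i : {v : V | Dominates G v ω}) : V) = ω (T i 0) :=
      hPo i 0 _ (SimpleGraph.Walk.start_mem_support _) ⟨n, hn⟩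
    have h1 : ((e i : {v : V | Dominates G v ω}) : V) = ω (T i 1) :=
      hPo i 1 _ (SimpleGraph.Walk.start_mem_support _) ⟨n, hn⟩
    have h2 : T i 0 = T i 1 := hray.1 (h0.symm.trans h1)
    exact absurd (hT i h2) (by norm_num)
  set S : Setup G ω k :=
    ⟨fun i => ((e i : {v : V | Dominates G v ω}) : V), hd, hdo, T, P, hT, hP, hPo, hPd⟩ with hSdef
  exact hk.2 ⟨fun j n => f S hray j n,
    fun j => ⟨f_isRay S hray j, f_rayEquiv S hray j⟩, f_disjoint S hray⟩

end PaperEnds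
end
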